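/- If A is a real n×n matrix with spectral radius strictly less than 1, then for any symmetric n×n matrix W the series ∑_{j=0}^∞ (Aᵀ)^j W A^j converges, and its limit X is the unique symmetric solution of the discrete Lyapunov equation AᵀXA + W = X. -/

import Mathlib

open Matrix
open scoped ENNReal

/-- Spectral radius of a real square matrix, computed over ℂ. -/
noncomputable def specRad {n : ℕ} (A : Matrix (Fin n) (Fin n) ℝ) : ℝ≥0∞ :=
  spectralRadius ℂ (A.map Complex.ofReal)

/-- A real square matrix is Schur stable if its spectral radius is `< 1`. -/
def IsSchur {n : ℕ} (A : Matrix (Fin n) (Fin n) ℝ) : Prop := specRad A < 1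

section LyapunovAux

open Filter

attribute [local instance] Matrix.frobeniusSeminormedAddCommGroup
  Matrix.frobeniusNormedAddCommGroup Matrix.frobeniusNormedRing
  Matrix.frobeniusNormedSpace Matrix.frobeniusNormedAlgebra

lemma frob_nnnorm_map_ofReal {n : ℕ} (A : Matrix (Fin n) (Fin n) ℝ) :
    ‖A.map Complex.ofReal‖₊ = ‖A‖₊ := by
  simp [Matrix.frobenius_nnnorm_def, Matrix.map_apply, Complex.nnnorm_real]

lemma schur_pow_bound {n : ℕ} (A : Matrix (Fin n) (Fin n) ℝ) (hA : IsSchur A) :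
    ∃ r : ℝ, 0 ≤ r ∧ r < 1 ∧ ∀ᶠ j : ℕ in atTop, ‖A ^ j‖ ≤ r ^ j := by
  set B : Matrix (Fin n) (Fin n) ℂ := A.map Complex.ofReal with hB
  obtain ⟨r, hr1, hr2⟩ := ENNReal.lt_iff_exists_nnreal_btwn.mp hA
  have hgel := spectrum.pow_nnnorm_pow_one_div_tendsto_nhds_spectralRadius B
  have hev : ∀ᶠ j : ℕ in atTop, (‖B ^ j‖₊ : ℝ≥0∞) ^ (1 / (j:ℝ)) < r :=
    hgel.eventually_lt_const hr1
  refine ⟨r, r.coe_nonneg, by exact_mod_cast hr2, ?_⟩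
  filter_upwards [hev, eventually_ge_atTop 1] with j hj hj1
  have hjne : (j:ℝ) ≠ 0 := by positivity
  have h1 : ((‖B ^ j‖₊ : ℝ≥0∞) ^ (1 / (j:ℝ))) ^ (j:ℝ) ≤ (r:ℝ≥0∞) ^ (j:ℝ) :=
    ENNReal.rpow_le_rpow hj.le (by positivity)
  rw [← ENNReal.rpow_mul, one_div, inv_mul_cancel₀ hjne, ENNReal.rpow_one,
    ENNReal.rpow_natCast] at h1
  have hBj : B ^ j = (A ^ j).map Complex.ofReal := by
    have := map_pow (Complex.ofRealHom.mapMatrix) A j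
    exact this.symm
  rw [hBj, frob_nnnorm_map_ofReal] at h1
  have h2 : ‖A ^ j‖₊ ≤ r ^ j := by exact_mod_cast h1
  exact_mod_cast h2

theorem stmt0_aux {n : ℕ} (A W : Matrix (Fin n) (Fin n) ℝ)
    (hA : IsSchur A) (hW : Wᵀ = W) :
    ∃ X : Matrix (Fin n) (Fin n) ℝ,
      HasSum (fun j : ℕ => Aᵀ ^ j * W * A ^ j) X ∧
      Xᵀ = X ∧ Aᵀ * X * A + W = X ∧
      ∀ X' : Matrix (Fin n) (Fin n) ℝ, X'ᵀ = X' → Aᵀ * X' * A + W = X' → X' = X := by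
  obtain ⟨r, hr0, hr1, hrev⟩ := schur_pow_bound A hA
  set f : ℕ → Matrix (Fin n) (Fin n) ℝ := fun j => Aᵀ ^ j * W * A ^ j with hf
  have hnormf : ∀ j : ℕ, ‖A ^ j‖ ≤ r ^ j → ‖f j‖ ≤ ‖W‖ * r ^ j := by
    intro j hj
    have h1 : ‖f j‖ ≤ ‖Aᵀ ^ j‖ * ‖W‖ * ‖A ^ j‖ :=
      (norm_mul_le _ _).trans (mul_le_mul_of_nonneg_right (norm_mul_le _ _) (norm_nonneg _))
    have h2 : ‖Aᵀ ^ j‖ = ‖A ^ j‖ := by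
      rw [← Matrix.transpose_pow, Matrix.frobenius_norm_transpose]
    have hrj1 : r ^ j ≤ 1 := pow_le_one₀ hr0 hr1.le
    calc ‖f j‖ ≤ ‖A ^ j‖ * ‖W‖ * ‖A ^ j‖ := by rw [h2] at h1; exact h1
      _ ≤ r ^ j * ‖W‖ * r ^ j := by gcongr
      _ = ‖W‖ * r ^ j * r ^ j := by ring
      _ ≤ ‖W‖ * r ^ j * 1 := by
          have : (0:ℝ) ≤ ‖W‖ * r ^ j := by positivity
          gcongr
      _ = ‖W‖ * r ^ j := by ring
  have hsummable : Summable f := by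
    refine Summable.of_norm_bounded_eventually_nat (g := fun j => ‖W‖ * r ^ j)
      ((summable_geometric_of_lt_one hr0 hr1).mul_left _) ?_
    filter_upwards [hrev] with j hj using hnormf j hj
  obtain ⟨X, hX⟩ := hsummable
  refine ⟨X, hX, ?_, ?_, ?_⟩
  · -- symmetry
    have hT : Continuous fun M : Matrix (Fin n) (Fin n) ℝ => Mᵀ :=
      Continuous.matrix_transpose continuous_id
    have := hX.map (Matrix.transposeAddEquiv (Fin n) (Fin n) ℝ).toAddMonoidHom hT
    simp only [AddEquiv.coe_toAddMonoidHom, Matrix.transposeAddEquiv_apply,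
      Function.comp_def] at this
    have hterm : ∀ j : ℕ, (f j)ᵀ = f j := by
      intro j
      simp [hf, Matrix.transpose_mul, Matrix.transpose_pow, hW, mul_assoc]
    rw [show (fun j => (f j)ᵀ) = f from funext hterm] at this
    exact (hX.unique this).symm
  · -- Lyapunov equation
    have hmul : Continuous fun M : Matrix (Fin n) (Fin n) ℝ => Aᵀ * M * A :=
      (continuous_const.matrix_mul continuous_id).matrix_mul continuous_const
    have hhom : ∀ M N : Matrix (Fin n) (Fin n) ℝ,
        Aᵀ * (M + N) * A = Aᵀ * M * A + Aᵀ * N * A := by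
      intro M N; rw [mul_add, add_mul]
    have hmap0 := hX.map (AddMonoidHom.mk' (fun M => Aᵀ * M * A) hhom) hmul
    have hmap : HasSum (fun j => Aᵀ * f j * A) (Aᵀ * X * A) := hmap0
    have hterm : ∀ j : ℕ, Aᵀ * f j * A = f (j + 1) := by
      intro j
      show Aᵀ * (Aᵀ ^ j * W * A ^ j) * A = Aᵀ ^ (j+1) * W * A ^ (j+1)
      rw [pow_succ' Aᵀ j, pow_succ A j]
      simp [mul_assoc]
    simp only [hterm] at hmap
    have := (hasSum_nat_add_iff (f := f) 1).mp hmap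
    have hf0 : ∑ i ∈ Finset.range 1, f i = W := by simp [hf]
    rw [hf0] at this
    exact (hX.unique this).symm
  · -- uniqueness
    intro X' _ hX'
    have hk : ∀ k : ℕ, X' = (∑ j ∈ Finset.range k, f j) + Aᵀ ^ k * X' * A ^ k := by
      intro k
      induction k with
      | zero => simp
      | succ k ih =>
        calc X' = (∑ j ∈ Finset.range k, f j) + Aᵀ ^ k * X' * A ^ k := ih
          _ = (∑ j ∈ Finset.range k, f j) + Aᵀ ^ k * (Aᵀ * X' * A + W) * A ^ k := by
              rw [hX']
          _ = (∑ j ∈ Finset.range k, f j) +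
                (Aᵀ ^ k * (Aᵀ * X' * A) * A ^ k + Aᵀ ^ k * W * A ^ k) := by
              rw [mul_add, add_mul]
          _ = ((∑ j ∈ Finset.range k, f j) + f k) + Aᵀ ^ (k+1) * X' * A ^ (k+1) := by
              have hstep : Aᵀ ^ k * (Aᵀ * X' * A) * A ^ k = Aᵀ ^ (k+1) * X' * A ^ (k+1) := by
                rw [pow_succ Aᵀ k, pow_succ' A k]
                simp [mul_assoc]
              rw [hstep]
              show _ = ((∑ j ∈ Finset.range k, f j) + Aᵀ ^ k * W * A ^ k) + _
              abel
          _ = (∑ j ∈ Finset.range (k+1), f j) + Aᵀ ^ (k+1) * X' * A ^ (k+1) := by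
              rw [Finset.sum_range_succ]
    have htail : Tendsto (fun k : ℕ => Aᵀ ^ k * X' * A ^ k) atTop (nhds 0) := by
      have hb : ∀ᶠ k : ℕ in atTop, ‖Aᵀ ^ k * X' * A ^ k‖ ≤ ‖X'‖ * r ^ k := by
        filter_upwards [hrev] with k hk2
        have h1 : ‖Aᵀ ^ k * X' * A ^ k‖ ≤ ‖Aᵀ ^ k‖ * ‖X'‖ * ‖A ^ k‖ :=
          (norm_mul_le _ _).trans (mul_le_mul_of_nonneg_right (norm_mul_le _ _) (norm_nonneg _))
        have h2 : ‖Aᵀ ^ k‖ = ‖A ^ k‖ := by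
          rw [← Matrix.transpose_pow, Matrix.frobenius_norm_transpose]
        have hrk1 : r ^ k ≤ 1 := pow_le_one₀ hr0 hr1.le
        calc ‖Aᵀ ^ k * X' * A ^ k‖ ≤ ‖A ^ k‖ * ‖X'‖ * ‖A ^ k‖ := by rw [h2] at h1; exact h1
          _ ≤ r ^ k * ‖X'‖ * r ^ k := by gcongr
          _ = ‖X'‖ * r ^ k * r ^ k := by ring
          _ ≤ ‖X'‖ * r ^ k * 1 := by
              have : (0:ℝ) ≤ ‖X'‖ * r ^ k := by positivity
              gcongr
          _ = ‖X'‖ * r ^ k := by ring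
      have ht : Filter.Tendsto (fun k : ℕ => ‖X'‖ * r ^ k) atTop (nhds 0) := by
        simpa using (tendsto_pow_atTop_nhds_zero_of_lt_one hr0 hr1).const_mul ‖X'‖
      exact squeeze_zero_norm' hb ht
    have hlim : Tendsto (fun k : ℕ => (∑ j ∈ Finset.range k, f j) + Aᵀ ^ k * X' * A ^ k)
        atTop (nhds (X + 0)) := hX.tendsto_sum_nat.add htail
    rw [add_zero] at hlim
    rw [show (fun k : ℕ => (∑ j ∈ Finset.range k, f j) + Aᵀ ^ k * X' * A ^ k)
        = fun _ => X' from funext fun k => (hk k).symm] at hlim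
    exact tendsto_nhds_unique tendsto_const_nhds hlim

end LyapunovAux

/-- If `A` is Schur stable then for any symmetric `W` the series
`∑ (Aᵀ)^j W A^j` converges, and its limit `X` is the unique symmetric solution of
the discrete Lyapunov equation `AᵀXA + W = X`. -/
theorem stmt0 {n : ℕ} (A W : Matrix (Fin n) (Fin n) ℝ)
    (hA : IsSchur A) (hW : Wᵀ = W) :
    ∃ X : Matrix (Fin n) (Fin n) ℝ,
      HasSum (fun j : ℕ => Aᵀ ^ j * W * A ^ j) X ∧
      Xᵀ = X ∧ Aᵀ * X * A + W = X ∧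
      ∀ X' : Matrix (Fin n) (Fin n) ℝ, X'ᵀ = X' → Aᵀ * X' * A + W = X' → X' = X :=
  stmt0_aux A W hA hW
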